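/- If X is a normally distributed random variable with mean μ and standard deviation σ, and Φ is the CDF of the standard normal distribution, then E[Φ(αX + β)] = Φ((β + αμ)/√(1 + α²σ²)) for any real α, β. -/

import Mathlib

open MeasureTheory ProbabilityTheory Real
open scoped NNReal ENNReal

noncomputable def stdNormCDF : ℝ → ℝ := ProbabilityTheory.cdf (ProbabilityTheory.gaussianReal 0 1)

lemma conv_pdf (v w : ℝ≥0) (hv : v ≠ 0) (hw : w ≠ 0) (z : ℝ) :
    ∫ x, gaussianPDFReal 0 v x * gaussianPDFReal 0 w (z - x)
      = gaussianPDFReal 0 (v + w) z := by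
  have ha : (0:ℝ) < v := lt_of_le_of_ne v.coe_nonneg (by exact_mod_cast (Ne.symm hv))
  have hb : (0:ℝ) < w := lt_of_le_of_ne w.coe_nonneg (by exact_mod_cast (Ne.symm hw))
  set a := (v:ℝ) with hav
  set b := (w:ℝ) with hbv
  have hab : (0:ℝ) < a + b := by linarith
  have hk : (0:ℝ) < (a + b) / (2 * a * b) := by positivity
  have key : ∀ x, gaussianPDFReal 0 v x * gaussianPDFReal 0 w (z - x)
      = ((√(2*π*a))⁻¹ * (√(2*π*b))⁻¹ * Real.exp (-z^2/(2*(a+b))))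
        * Real.exp (-((a+b)/(2*a*b)) * (x - a*z/(a+b))^2) := by
    intro x
    simp only [gaussianPDFReal, sub_zero, ← hav, ← hbv]
    have he : rexp (-x ^ 2 / (2 * a)) * rexp (-(z - x) ^ 2 / (2 * b)) =
        rexp (-z^2/(2*(a+b))) * rexp (-((a+b)/(2*a*b)) * (x - a*z/(a+b))^2) := by
      rw [← Real.exp_add, ← Real.exp_add]
      congr 1
      field_simp
      ring
    rw [mul_mul_mul_comm, he]
    ring
  rw [integral_congr_ae (ae_of_all _ key), integral_const_mul,
    integral_sub_right_eq_self (fun x => Real.exp (-((a+b)/(2*a*b)) * x^2)) (a*z/(a+b)),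
    integral_gaussian]
  have hs : √(π / ((a+b)/(2*a*b))) = √(2*π*a) * √(2*π*b) / √(2*π*(a+b)) := by
    rw [← Real.sqrt_mul (by positivity), ← Real.sqrt_div (by positivity)]
    congr 1
    field_simp
  rw [hs]
  have h1 : √(2*π*a) ≠ 0 := by positivity
  have h2 : √(2*π*b) ≠ 0 := by positivity
  have h3 : √(2*π*(a+b)) ≠ 0 := by positivity
  simp only [gaussianPDFReal, sub_zero]
  have : ((v:ℝ) + (w:ℝ)) = a + b := rfl
  rw [NNReal.coe_add, ← hav, ← hbv]
  field_simp

lemma conv_pdf_lintegral (v w : ℝ≥0) (hv : v ≠ 0) (hw : w ≠ 0) (z : ℝ) :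
    ∫⁻ x, gaussianPDF 0 v x * gaussianPDF 0 w (z - x) = gaussianPDF 0 (v + w) z := by
  have hint : Integrable (fun x => gaussianPDFReal 0 v x * gaussianPDFReal 0 w (z - x)) := by
    refine Integrable.mono' ((integrable_gaussianPDFReal 0 v).mul_const ((√(2*π*w))⁻¹))
      ?_ (ae_of_all _ fun x => ?_)
    · exact ((measurable_gaussianPDFReal 0 v).mul
        ((measurable_gaussianPDFReal 0 w).comp (measurable_const.sub measurable_id))).aestronglyMeasurable
    · rw [Real.norm_eq_abs, abs_of_nonneg (mul_nonneg (gaussianPDFReal_nonneg _ _ _)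
        (gaussianPDFReal_nonneg _ _ _))]
      refine mul_le_mul_of_nonneg_left ?_ (gaussianPDFReal_nonneg _ _ _)
      rw [gaussianPDFReal]
      simp only [sub_zero]
      refine (mul_le_of_le_one_right (by positivity) (Real.exp_le_one_iff.2 ?_))
      have : (0:ℝ) < w := lt_of_le_of_ne w.coe_nonneg (by exact_mod_cast (Ne.symm hw))
      have h2 : (0:ℝ) ≤ (z - x - 0)^2 := sq_nonneg _
      rw [div_nonpos_iff]
      right
      constructor <;> [linarith [sq_nonneg (z - x - 0)]; linarith]
  simp only [gaussianPDF]
  simp_rw [← ENNReal.ofReal_mul (gaussianPDFReal_nonneg _ _ _)]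
  rw [← ofReal_integral_eq_lintegral_ofReal hint (ae_of_all _ fun x =>
    mul_nonneg (gaussianPDFReal_nonneg _ _ _) (gaussianPDFReal_nonneg _ _ _)),
    conv_pdf v w hv hw z]

lemma gaussian_conv0 (v w : ℝ≥0) (hv : v ≠ 0) (hw : w ≠ 0) :
    Measure.map (fun p : ℝ × ℝ => p.1 + p.2) ((gaussianReal 0 v).prod (gaussianReal 0 w))
      = gaussianReal 0 (v + w) := by
  have hadd : Measurable fun p : ℝ × ℝ => p.1 + p.2 := measurable_fst.add measurable_snd
  have hpdfw : Measurable fun p : ℝ × ℝ => gaussianPDF 0 w (p.1 - p.2) :=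
    (measurable_gaussianPDF 0 w).comp (measurable_fst.sub measurable_snd)
  ext s hs
  rw [Measure.map_apply hadd hs, Measure.prod_apply (hadd hs)]
  have h1 : ∀ x : ℝ, gaussianReal 0 w (Prod.mk x ⁻¹' ((fun p : ℝ × ℝ => p.1 + p.2) ⁻¹' s))
      = ∫⁻ z, s.indicator 1 z * gaussianPDF 0 w (z - x) := by
    intro x
    have hpre : (Prod.mk x ⁻¹' ((fun p : ℝ × ℝ => p.1 + p.2) ⁻¹' s))
        = (fun y => x + y) ⁻¹' s := rfl
    rw [hpre, gaussianReal_apply 0 hw, ← lintegral_indicator (hs.preimage (measurable_const_add x)) _,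
      ← lintegral_add_right_eq_self (fun z => ((fun y => x + y) ⁻¹' s).indicator (gaussianPDF 0 w) z) (-x)]
    congr 1 with z
    by_cases hz : z ∈ s
    · simp [Set.indicator_apply, Set.mem_preimage, hz, sub_eq_add_neg]
    · simp [Set.indicator_apply, Set.mem_preimage, hz, sub_eq_add_neg]
  simp_rw [h1]
  have hFm : Measurable fun q : ℝ × ℝ => s.indicator 1 q.2 * gaussianPDF 0 w (q.2 - q.1) :=
    ((measurable_one.indicator hs).comp measurable_snd).mul
      ((measurable_gaussianPDF 0 w).comp (measurable_snd.sub measurable_fst))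
  have hgm : Measurable fun x : ℝ => ∫⁻ z, s.indicator 1 z * gaussianPDF 0 w (z - x) :=
    Measurable.lintegral_prod_right' hFm
  rw [gaussianReal_of_var_ne_zero 0 hv,
    lintegral_withDensity_eq_lintegral_mul _ (measurable_gaussianPDF 0 v) hgm]
  simp only [Pi.mul_apply]
  have h2 : ∀ x : ℝ, gaussianPDF 0 v x * ∫⁻ z, s.indicator 1 z * gaussianPDF 0 w (z - x)
      = ∫⁻ z, s.indicator 1 z * (gaussianPDF 0 v x * gaussianPDF 0 w (z - x)) := by
    intro x
    rw [← lintegral_const_mul' _ _ (show gaussianPDF 0 v x ≠ ⊤ from ENNReal.ofReal_ne_top)]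
    congr 1 with z
    ring
  simp_rw [h2]
  rw [lintegral_lintegral_swap]
  · have h3 : ∀ z : ℝ, ∫⁻ x, s.indicator 1 z * (gaussianPDF 0 v x * gaussianPDF 0 w (z - x))
        = s.indicator (gaussianPDF 0 (v + w)) z := by
      intro z
      have htop : s.indicator (1 : ℝ → ℝ≥0∞) z ≠ ⊤ := by
        by_cases hz : z ∈ s <;> simp [Set.indicator_apply, hz]
      rw [lintegral_const_mul' _ _ htop, conv_pdf_lintegral v w hv hw z]
      by_cases hz : z ∈ s
      · simp [Set.indicator_apply, hz]
      · simp [Set.indicator_apply, hz]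
    simp_rw [h3]
    rw [lintegral_indicator hs _, gaussianReal_apply 0 (by simp [hv])]
  · exact (((measurable_one.indicator hs).comp measurable_snd).mul
      (((measurable_gaussianPDF 0 v).comp measurable_fst).mul
        ((measurable_gaussianPDF 0 w).comp (measurable_snd.sub measurable_fst)))).aemeasurable

lemma gaussian_conv (m1 m2 : ℝ) (v w : ℝ≥0) :
    Measure.map (fun p : ℝ × ℝ => p.1 + p.2) ((gaussianReal m1 v).prod (gaussianReal m2 w))
      = gaussianReal (m1 + m2) (v + w) := by
  have hadd : Measurable fun p : ℝ × ℝ => p.1 + p.2 := measurable_fst.add measurable_snd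
  by_cases hv : v = 0
  · subst hv
    rw [gaussianReal_zero_var, Measure.dirac_prod,
      Measure.map_map hadd measurable_prodMk_left]
    have : ((fun p : ℝ × ℝ => p.1 + p.2) ∘ Prod.mk m1) = fun y => m1 + y := rfl
    rw [this, gaussianReal_map_const_add, add_comm m2 m1, zero_add]
  by_cases hw : w = 0
  · subst hw
    rw [gaussianReal_zero_var, Measure.prod_dirac,
      Measure.map_map hadd measurable_prodMk_right]
    have : ((fun p : ℝ × ℝ => p.1 + p.2) ∘ fun x => (x, m2)) = fun x => x + m2 := rfl
    rw [this, gaussianReal_map_add_const, add_zero]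
  have e1 : (gaussianReal 0 v).map (· + m1) = gaussianReal m1 v := by
    rw [gaussianReal_map_add_const, zero_add]
  have e2 : (gaussianReal 0 w).map (· + m2) = gaussianReal m2 w := by
    rw [gaussianReal_map_add_const, zero_add]
  rw [← e1, ← e2, Measure.map_prod_map _ _ (measurable_add_const m1) (measurable_add_const m2),
    Measure.map_map hadd ((measurable_add_const m1).prodMap (measurable_add_const m2))]
  have hcomp : ((fun p : ℝ × ℝ => p.1 + p.2) ∘ Prod.map (· + m1) (· + m2))
      = (fun y => y + (m1 + m2)) ∘ (fun p : ℝ × ℝ => p.1 + p.2) := by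
    funext p
    simp [Prod.map]
    ring
  rw [hcomp, ← Measure.map_map (measurable_add_const (m1 + m2)) hadd,
    gaussian_conv0 v w hv hw, gaussianReal_map_add_const, zero_add]

lemma gauss_Iic (m : ℝ) (V : ℝ≥0) (hV : V ≠ 0) (t : ℝ) :
    ((gaussianReal m V) (Set.Iic t)).toReal = stdNormCDF ((t - m) / Real.sqrt V) := by
  have hVpos : (0:ℝ) < V := lt_of_le_of_ne V.coe_nonneg (by exact_mod_cast (Ne.symm hV))
  have hs : (0:ℝ) < Real.sqrt V := Real.sqrt_pos.2 hVpos
  have h1 : (gaussianReal 0 1).map (Real.sqrt V * ·) = gaussianReal 0 V := by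
    rw [gaussianReal_map_const_mul]
    congr 1
    · ring
    · ext
      push_cast
      rw [mul_one, Real.sq_sqrt V.coe_nonneg]
  have hmap : (gaussianReal 0 1).map (fun x => Real.sqrt V * x + m) = gaussianReal m V := by
    have : (fun x => Real.sqrt V * x + m) = (· + m) ∘ (Real.sqrt V * ·) := rfl
    rw [this, ← Measure.map_map (measurable_add_const m) (measurable_const_mul _), h1,
      gaussianReal_map_add_const, zero_add]
  rw [← hmap, Measure.map_apply ((measurable_const_mul _).add_const m) measurableSet_Iic]
  have hpre : (fun x => Real.sqrt V * x + m) ⁻¹' (Set.Iic t) = Set.Iic ((t - m) / Real.sqrt V) := by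
    ext x
    simp only [Set.mem_preimage, Set.mem_Iic]
    rw [le_div_iff₀ hs, mul_comm]
    constructor <;> intro h <;> linarith
  rw [hpre, stdNormCDF, cdf_eq_real, measureReal_def]

lemma integral_stdNormCDF_gauss (M : ℝ) (V : ℝ≥0) :
    ∫ z, stdNormCDF z ∂(gaussianReal M V) = stdNormCDF (M / Real.sqrt (1 + (V:ℝ))) := by
  set ρ := gaussianReal M V with hρ
  have hsm : MeasurableSet {p : ℝ × ℝ | p.2 ≤ p.1} := measurableSet_le measurable_snd measurable_fst
  have hA : ∫ z, stdNormCDF z ∂ρ = ((ρ.prod (gaussianReal 0 1)) {p : ℝ × ℝ | p.2 ≤ p.1}).toReal := by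
    have : ∀ z : ℝ, stdNormCDF z = ((gaussianReal 0 1) (Set.Iic z)).toReal :=
      fun z => cdf_eq_real _ z
    simp_rw [this]
    rw [Measure.prod_apply hsm,
      ← integral_toReal (measurable_measure_prodMk_left hsm).aemeasurable
        (ae_of_all _ fun z => measure_lt_top _ _)]
    rfl
  have hT : {p : ℝ × ℝ | p.2 ≤ p.1}
      = ((fun p : ℝ × ℝ => p.1 + p.2) ∘ Prod.map (Neg.neg : ℝ → ℝ) (id : ℝ → ℝ)) ⁻¹' (Set.Iic 0) := by
    ext p
    simp only [Set.mem_setOf_eq, Set.mem_preimage, Function.comp_apply, Prod.map_fst,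
      Prod.map_snd, id_eq, Set.mem_Iic]
    constructor <;> intro h <;> linarith
  have hmeas : Measurable ((fun p : ℝ × ℝ => p.1 + p.2) ∘ Prod.map (Neg.neg : ℝ → ℝ) (id : ℝ → ℝ)) :=
    (measurable_fst.add measurable_snd).comp (measurable_neg.prodMap measurable_id)
  rw [hA, hT, ← Measure.map_apply hmeas measurableSet_Iic,
    ← Measure.map_map (g := fun p : ℝ × ℝ => p.1 + p.2) (measurable_fst.add measurable_snd) (measurable_neg.prodMap measurable_id),
    ← Measure.map_prod_map _ _ measurable_neg measurable_id]
  have hneg : Measure.map (Neg.neg : ℝ → ℝ) ρ = gaussianReal (-M) V := by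
    rw [show (Neg.neg : ℝ → ℝ) = ((-1 : ℝ) * ·) from funext fun x => by ring, hρ,
      gaussianReal_map_const_mul,
      show (NNReal.mk ((-1 : ℝ) ^ 2) (sq_nonneg _) : ℝ≥0) = 1 from by ext; norm_num, one_mul]

  rw [hneg, Measure.map_id, gaussian_conv (-M) 0 V 1, add_zero]
  have h10 : V + 1 ≠ 0 := by simp
  rw [gauss_Iic (-M) (V + 1) h10 0]
  congr 1
  push_cast
  rw [zero_sub, neg_neg, add_comm]

theorem stmt_0 {Ω : Type*} [MeasurableSpace Ω] (Pr : Measure Ω) [IsProbabilityMeasure Pr]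
    (X : Ω → ℝ) (μ σ : ℝ) (hσ : 0 < σ)
    (hX : Measure.map X Pr = gaussianReal μ ⟨σ ^ 2, sq_nonneg σ⟩)
    (α β : ℝ) :
    ∫ ω, stdNormCDF (α * X ω + β) ∂Pr
      = stdNormCDF ((β + α * μ) / Real.sqrt (1 + α ^ 2 * σ ^ 2)) := by
  have hXm : AEMeasurable X Pr := aemeasurable_of_map_neZero (by rw [hX]; exact @IsProbabilityMeasure.neZero _ _ _ (instIsProbabilityMeasureGaussianReal _ _))
  set V : ℝ≥0 := ⟨σ ^ 2, sq_nonneg σ⟩ with hV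
  set W : ℝ≥0 := ⟨α ^ 2, sq_nonneg α⟩ * V with hW
  have hmul : Measure.map (fun ω => α * X ω) Pr = gaussianReal (α * μ) W := by
    have : (fun ω => α * X ω) = (α * ·) ∘ X := rfl
    rw [this, ← AEMeasurable.map_map_of_aemeasurable (measurable_const_mul α).aemeasurable hXm,
      hX, gaussianReal_map_const_mul]
    rfl
  have h1 : Measure.map (fun ω => α * X ω + β) Pr = gaussianReal (α * μ + β) W := by
    have : (fun ω => α * X ω + β) = (· + β) ∘ (fun ω => α * X ω) := rfl
    rw [this, ← AEMeasurable.map_map_of_aemeasurable (measurable_add_const β).aemeasurable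
      (hXm.const_mul α), hmul, gaussianReal_map_add_const]
  have hcdfm : Measurable stdNormCDF := (monotone_cdf _).measurable
  have h2 : ∫ ω, stdNormCDF (α * X ω + β) ∂Pr
      = ∫ z, stdNormCDF z ∂(Measure.map (fun ω => α * X ω + β) Pr) := by
    rw [integral_map ((hXm.const_mul α).add_const β) hcdfm.aestronglyMeasurable]
  rw [h2, h1, integral_stdNormCDF_gauss]
  congr 1
  have hWc : (W : ℝ) = α ^ 2 * σ ^ 2 := by
    rw [hW]; erw [NNReal.coe_mul]
    rfl
  rw [hWc, add_comm (α * μ) β]
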